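/- Let Π ⊆ Σ₅ be the set of all x ∈ {0,1,2,3,4}^ℤ containing no block from the forbidden set F = {1 0ᵏ 3, 1 0ᵏ 4, 2 0ᵏ 1, 2 0ᵏ 4, 3 0ᵏ 2, 3 0ᵏ 1, 4 0ᵏ 2, 4 0ᵏ 3 : k ∈ ℕ ∪ {0}} (where 0ᵏ denotes the word of k consecutive symbols 0). Then Π is a subshift which is not a shift of finite type. -/

import Mathlib

open Filter Set

/-- The shift map on `Σ_n = (Fin n)^ℤ`. -/
def shiftMap {n : ℕ} (x : ℤ → Fin n) : ℤ → Fin n := fun i => x (i + 1)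

/-- A subshift: a nonempty closed strongly shift-invariant subset of `Σ_n`. -/
def IsSubshift {n : ℕ} (Y : Set (ℤ → Fin n)) : Prop :=
  Y.Nonempty ∧ IsClosed Y ∧ shiftMap '' Y = Y

/-- A subshift of finite type: membership is determined by a set of allowed windows of
some fixed length `m > 0`. -/
def IsSFT {n : ℕ} (Y : Set (ℤ → Fin n)) : Prop :=
  IsSubshift Y ∧ ∃ m : ℕ, 0 < m ∧ ∃ M : Set (Fin m → Fin n),
    ∀ x : ℤ → Fin n, x ∈ Y ↔ ∀ i : ℤ, (fun t : Fin m => x (i + (t : ℕ))) ∈ M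

/-- The pairs `(a,b)` such that `a 0ᵏ b` is a forbidden word of the sofic shift `Π`. -/
def ForbiddenPair (a b : Fin 5) : Prop :=
  (a = 1 ∧ b = 3) ∨ (a = 1 ∧ b = 4) ∨ (a = 2 ∧ b = 1) ∨ (a = 2 ∧ b = 4) ∨
  (a = 3 ∧ b = 2) ∨ (a = 3 ∧ b = 1) ∨ (a = 4 ∧ b = 2) ∨ (a = 4 ∧ b = 3)

/-- The set `Π`: points of `{0,1,2,3,4}^ℤ` containing no block of the form `a 0ᵏ b` with
`(a,b)` a forbidden pair. -/
def PiShift : Set (ℤ → Fin 5) :=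
  {x | ∀ i j : ℤ, i < j → (∀ t : ℤ, i < t → t < j → x t = 0) →
    ¬ ForbiddenPair (x i) (x j)}


lemma fp_ne : ∀ a b : Fin 5, ForbiddenPair a b → a ≠ 0 ∧ b ≠ 0 := by
  unfold ForbiddenPair; decide

lemma single_mem (c : Fin 5) (p : ℤ) :
    (fun t : ℤ => if t = p then c else 0) ∈ PiShift := by
  intro i j hij _ hfp
  rcases fp_ne _ _ hfp with ⟨h1, h2⟩
  by_cases hi : i = p
  · exact h2 (by simp [show j ≠ p by omega])
  · exact h1 (by simp [hi])

lemma piShift_closed : IsClosed PiShift := by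
  have hrw : PiShift = ⋂ (i : ℤ) (j : ℤ),
      {x : ℤ → Fin 5 | i < j → (∀ t : ℤ, i < t → t < j → x t = 0) →
        ¬ ForbiddenPair (x i) (x j)} := by
    ext x
    simp only [PiShift, mem_setOf_eq, mem_iInter]
  rw [hrw]
  refine isClosed_iInter fun i => isClosed_iInter fun j => ?_
  by_cases hij : i < j
  · have hi : i ∈ Finset.Icc i j := by simp; omega
    have hj : j ∈ Finset.Icc i j := by simp; omega
    have heq : {x : ℤ → Fin 5 | i < j → (∀ t : ℤ, i < t → t < j → x t = 0) →
          ¬ ForbiddenPair (x i) (x j)}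
        = (fun x : ℤ → Fin 5 => fun t : Finset.Icc i j => x t) ⁻¹'
          {f : Finset.Icc i j → Fin 5 |
            (∀ t : Finset.Icc i j, i < (t : ℤ) → (t : ℤ) < j → f t = 0) →
              ¬ ForbiddenPair (f ⟨i, hi⟩) (f ⟨j, hj⟩)} := by
      ext x
      simp only [mem_setOf_eq, mem_preimage]
      constructor
      · intro h hz
        exact h hij fun t ht1 ht2 => hz ⟨t, by simp; omega⟩ ht1 ht2
      · intro h _ hz
        exact h fun t ht1 ht2 => hz (t : ℤ) ht1 ht2
    rw [heq]
    exact (isClosed_discrete _).preimage (continuous_pi fun t => continuous_apply _)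
  · have : {x : ℤ → Fin 5 | i < j → (∀ t : ℤ, i < t → t < j → x t = 0) →
        ¬ ForbiddenPair (x i) (x j)} = univ := by
      ext x; simp [hij]
    rw [this]; exact isClosed_univ

lemma piShift_shift : shiftMap '' PiShift = PiShift := by
  ext x
  constructor
  · rintro ⟨y, hy, rfl⟩
    intro i j hij hz hfp
    refine hy (i + 1) (j + 1) (by omega) (fun t ht1 ht2 => ?_) hfp
    have := hz (t - 1) (by omega) (by omega)
    simpa [shiftMap, sub_add_cancel] using this
  · intro hx
    refine ⟨fun t => x (t - 1), fun i j hij hz => ?_, by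
      funext t; simp [shiftMap]⟩
    have := hx (i - 1) (j - 1) (by omega) (fun t ht1 ht2 => by
      have := hz (t + 1) (by omega) (by omega)
      simpa using this)
    exact this

theorem PiShift_subshift_not_SFT :
    IsSubshift PiShift ∧ ¬ IsSFT PiShift := by
  have hsub : IsSubshift PiShift := by
    refine ⟨⟨fun _ => 0, ?_⟩, piShift_closed, piShift_shift⟩
    intro i j hij hz hfp
    exact (fp_ne _ _ hfp).1 rfl
  refine ⟨hsub, ?_⟩
  rintro ⟨-, m, hm, M, hM⟩
  set u1 : ℤ → Fin 5 := fun t => if t = 0 then 1 else 0 with hu1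
  set u3 : ℤ → Fin 5 := fun t => if t = (m : ℤ) then 3 else 0 with hu3
  set x : ℤ → Fin 5 := fun t => if t = 0 then 1 else if t = (m : ℤ) then 3 else 0 with hxdef
  have hx : x ∈ PiShift := by
    rw [hM]
    intro i
    by_cases hi : i ≤ 0
    · have : (fun t : Fin m => x (i + (t : ℕ))) = (fun t : Fin m => u1 (i + (t : ℕ))) := by
        funext t
        have ht := t.isLt
        have hne : i + (t : ℕ) ≠ (m : ℤ) := by omega
        by_cases h0 : i + ((t : ℕ) : ℤ) = 0 <;> simp [hxdef, hu1, h0, hne]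
      rw [this]
      exact (hM u1).mp (single_mem 1 0) i
    · have : (fun t : Fin m => x (i + (t : ℕ))) = (fun t : Fin m => u3 (i + (t : ℕ))) := by
        funext t
        have hne : i + ((t : ℕ) : ℤ) ≠ 0 := by omega
        by_cases h0 : i + ((t : ℕ) : ℤ) = (m : ℤ) <;> simp [hxdef, hu3, h0, hne, hm.ne']
      rw [this]
      exact (hM u3).mp (single_mem 3 (m : ℤ)) i
  have hmz : (0 : ℤ) < (m : ℤ) := by exact_mod_cast hm
  refine hx 0 (m : ℤ) hmz (fun t ht1 ht2 => by
    simp [hxdef, show t ≠ 0 by omega, show t ≠ (m : ℤ) by omega]) ?_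
  have h0 : x 0 = 1 := by simp [hxdef]
  have h3 : x (m : ℤ) = 3 := by simp [hxdef, show (m : ℤ) ≠ 0 by omega, hm.ne']
  rw [h0, h3]
  exact Or.inl ⟨rfl, rfl⟩
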